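/- arXiv:2205.12942 — 6 statements merged into one kernel-verified Lean document; each statement's English description precedes it below -/
import Mathlib

section
/- Let B ⊆ ∂φ(M) and B′ ⊆ ∂φ′(M) be boundary sets of a manifold M under envelopments φ and φ′, and let U ⊆ M be open. If B is strongly attached to U and B covers B′ (B ▷ B′), then B′ is strongly attached to U. -/
open scoped Manifold
open Set Filter Topology

universe u

/-- An *envelopment* of a manifold `M` (modelled on `I`): a smooth embedding of `M` into a
smooth manifold of the same dimension (same model), whose target is Hausdorff, connected and
paracompact; being an embedding of equidimensional manifolds, its image is open. -/
structure Envelopment {E H : Type u} [NormedAddCommGroup E] [NormedSpace ℝ E]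
    [TopologicalSpace H] (I : ModelWithCorners ℝ E H)
    (M : Type u) [TopologicalSpace M] [ChartedSpace H M] : Type (u + 1) where
  carrier : Type u
  [ts : TopologicalSpace carrier]
  [t2 : T2Space carrier]
  [conn : ConnectedSpace carrier]
  [pc : ParacompactSpace carrier]
  [cs : ChartedSpace H carrier]
  [sm : IsManifold I (⊤ : ℕ∞) carrier]
  map : M → carrier
  smooth : ContMDiff I I (⊤ : ℕ∞) map
  immersion : ∀ x : M, Function.Injective (mfderiv I I map x)
  emb : IsOpenEmbedding map

attribute [instance] Envelopment.ts Envelopment.t2 Envelopment.conn Envelopment.pc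
  Envelopment.cs Envelopment.sm

variable {E H : Type u} [NormedAddCommGroup E] [NormedSpace ℝ E] [TopologicalSpace H]
variable {I : ModelWithCorners ℝ E H}
variable {M : Type u} [TopologicalSpace M] [ChartedSpace H M]

/-- A *boundary set*: a nonempty subset of the topological boundary `∂φ(M)` of the image of an
envelopment `φ`. -/
structure BoundarySet {E H : Type u} [NormedAddCommGroup E] [NormedSpace ℝ E]
    [TopologicalSpace H] (I : ModelWithCorners ℝ E H)
    (M : Type u) [TopologicalSpace M] [ChartedSpace H M] : Type (u + 1) where
  env : Envelopment I M
  set : Set env.carrier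
  nonempty : set.Nonempty
  subset_frontier : set ⊆ frontier (Set.range env.map)

/-- `B` covers `B'` (written `B ▷ B'`): for every open neighbourhood `N` of `B` there is an
open neighbourhood `N'` of `B'` with `φ(φ'⁻¹(N' ∩ φ'(M))) ⊆ N`. -/
def Covers (B B' : BoundarySet I M) : Prop :=
  ∀ N : Set B.env.carrier, IsOpen N → B.set ⊆ N →
    ∃ N' : Set B'.env.carrier, IsOpen N' ∧ B'.set ⊆ N' ∧
      B.env.map '' (B'.env.map ⁻¹' N') ⊆ N

theorem covers_refl (B : BoundarySet I M) : Covers B B :=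
  fun N hN hBN => ⟨N, hN, hBN, Set.image_preimage_subset _ _⟩

theorem covers_trans {B B' B'' : BoundarySet I M} (h : Covers B B') (h' : Covers B' B'') :
    Covers B B'' := by
  intro N hN hBN
  obtain ⟨N', hN', hB'N', hsub⟩ := h N hN hBN
  obtain ⟨N'', hN'', hB''N'', hsub'⟩ := h' N' hN' hB'N'
  refine ⟨N'', hN'', hB''N'', ?_⟩
  rintro x ⟨m, hm, rfl⟩
  exact hsub ⟨m, hsub' ⟨m, hm, rfl⟩, rfl⟩

/-- Boundary sets are equivalent when each covers the other. -/
def bsSetoid {E H : Type u} [NormedAddCommGroup E] [NormedSpace ℝ E]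
    [TopologicalSpace H] (I : ModelWithCorners ℝ E H)
    (M : Type u) [TopologicalSpace M] [ChartedSpace H M] : Setoid (BoundarySet I M) where
  r B B' := Covers B B' ∧ Covers B' B
  iseqv := ⟨fun B => ⟨covers_refl B, covers_refl B⟩, fun h => ⟨h.2, h.1⟩,
    fun h h' => ⟨covers_trans h.1 h'.1, covers_trans h'.2 h.2⟩⟩

/-- An equivalence class of boundary sets is an *abstract boundary point* when it has a
singleton representative under some envelopment. -/
def IsAbstractPoint (q : Quotient (bsSetoid I M)) : Prop :=
  ∃ B : BoundarySet I M, Quotient.mk (bsSetoid I M) B = q ∧ ∃ p, B.set = {p}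

/-- The abstract boundary `𝓑(M)`: all abstract boundary points. -/
def AbstractBoundary {E H : Type u} [NormedAddCommGroup E] [NormedSpace ℝ E]
    [TopologicalSpace H] (I : ModelWithCorners ℝ E H)
    (M : Type u) [TopologicalSpace M] [ChartedSpace H M] :=
  {q : Quotient (bsSetoid I M) // IsAbstractPoint q}

/-- The singleton boundary set `{p}` at a boundary point `p` of an envelopment. -/
def singletonBS (e : Envelopment I M) {p : e.carrier}
    (hp : p ∈ frontier (Set.range e.map)) : BoundarySet I M :=
  ⟨e, {p}, Set.singleton_nonempty p, Set.singleton_subset_iff.mpr hp⟩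

/-- The abstract boundary point `[p]` determined by a boundary point `p` of an envelopment. -/
def absOf (e : Envelopment I M) {p : e.carrier}
    (hp : p ∈ frontier (Set.range e.map)) : AbstractBoundary I M :=
  ⟨Quotient.mk (bsSetoid I M) (singletonBS e hp), singletonBS e hp, rfl, p, rfl⟩

/-- A boundary set `B ⊆ ∂φ(M)` is *strongly attached* to an open `U ⊆ M` when some open
`N ⊇ B` satisfies `N ∩ φ(M) ⊆ φ(U)`. -/
def StronglyAttached (B : BoundarySet I M) (U : Set M) : Prop :=
  ∃ N : Set B.env.carrier, IsOpen N ∧ B.set ⊆ N ∧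
    N ∩ Set.range B.env.map ⊆ B.env.map '' U

/-- An abstract boundary point is strongly attached to `U` when its representatives are. -/
def AbsStronglyAttached (x : AbstractBoundary I M) (U : Set M) : Prop :=
  ∀ B : BoundarySet I M, Quotient.mk (bsSetoid I M) B = x.1 → StronglyAttached B U

/-- `𝓑_U`: the set of abstract boundary points strongly attached to `U`. -/
def absAttachedSet (I : ModelWithCorners ℝ E H) (M : Type u) [TopologicalSpace M]
    [ChartedSpace H M] (U : Set M) : Set (AbstractBoundary I M) :=
  {x | AbsStronglyAttached x U}

/-- `M̄ = M ∪ 𝓑(M)`. -/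
def Mbar {E H : Type u} [NormedAddCommGroup E] [NormedSpace ℝ E]
    [TopologicalSpace H] (I : ModelWithCorners ℝ E H)
    (M : Type u) [TopologicalSpace M] [ChartedSpace H M] :=
  M ⊕ AbstractBoundary I M

/-- The strongly attached point topology `𝒯_sap` on `M̄`, generated by the basis
`{U ∪ 𝓑_U : U ⊆ M open}`. -/
instance : TopologicalSpace (Mbar I M) :=
  TopologicalSpace.generateFrom
    {s | ∃ U : Set M, IsOpen U ∧
      s = Sum.inl '' U ∪ Sum.inr '' absAttachedSet I M U}

/-- An open `U ⊆ M` is a *singular neighbourhood* (w.r.t. a distinguished set `𝒮` of abstract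
boundary points) when every point of `𝒮` is strongly attached to `U`. -/
def SingularNbhd (𝒮 : Set (AbstractBoundary I M)) (U : Set M) : Prop :=
  IsOpen U ∧ ∀ x ∈ 𝒮, AbsStronglyAttached x U

/-- A closed `A ⊆ M` is *singularly compact* when `A \ U` is compact for every singular
neighbourhood `U`. -/
def SingularlyCompact (𝒮 : Set (AbstractBoundary I M)) (A : Set M) : Prop :=
  IsClosed A ∧ ∀ U : Set M, SingularNbhd 𝒮 U → IsCompact (A \ U)

/-- Inclusion of `M` into `M̄`. -/
def Mbar.ofM {E H : Type u} [NormedAddCommGroup E] [NormedSpace ℝ E]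
    [TopologicalSpace H] {I : ModelWithCorners ℝ E H}
    {M : Type u} [TopologicalSpace M] [ChartedSpace H M] (p : M) : Mbar I M :=
  Sum.inl p

/-- Inclusion of the abstract boundary `𝓑(M)` into `M̄`. -/
def Mbar.ofB {E H : Type u} [NormedAddCommGroup E] [NormedSpace ℝ E]
    [TopologicalSpace H] {I : ModelWithCorners ℝ E H}
    {M : Type u} [TopologicalSpace M] [ChartedSpace H M] (x : AbstractBoundary I M) :
    Mbar I M :=
  Sum.inr x

/-- If a boundary set `B` is strongly attached to an open set `U ⊆ M` and `B` covers `B′`,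
then `B′` is strongly attached to `U`. -/
theorem stronglyAttached_of_covers
    {E H : Type u} [NormedAddCommGroup E] [NormedSpace ℝ E] [TopologicalSpace H]
    {I : ModelWithCorners ℝ E H} {M : Type u} [TopologicalSpace M] [ChartedSpace H M]
    [IsManifold I (⊤ : ℕ∞) M] [T2Space M] [ConnectedSpace M] [ParacompactSpace M]
    (B B' : BoundarySet I M) (U : Set M) (hU : IsOpen U)
    (hB : StronglyAttached B U) (hcov : Covers B B') :
    StronglyAttached B' U := by
  obtain ⟨N, hN, hBN, hNU⟩ := hB
  obtain ⟨N', hN', hB'N', hsub⟩ := hcov N hN hBN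
  refine ⟨N', hN', hB'N', ?_⟩
  rintro x ⟨hxN', m, rfl⟩
  have h1 : B.env.map m ∈ N := hsub ⟨m, hxN', rfl⟩
  obtain ⟨u, hu, hum⟩ := hNU ⟨h1, m, rfl⟩
  have : u = m := B.env.emb.injective hum
  exact ⟨m, this ▸ hu, rfl⟩
end

section
/- Let φ : M → M̂ be an envelopment and let σ_φ := {[p] ∈ 𝓑(M) : p ∈ ∂φ(M)}. When ∂φ(M) carries the subspace topology from M̂ and σ_φ carries the subspace topology induced by the strongly attached point topology 𝒯_sap on M̄, the map π : ∂φ(M) → σ_φ given by π(p) = [p] is a homeomorphism. -/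
open scoped Manifold
open Set Filter Topology

universe u

variable {E H : Type u} [NormedAddCommGroup E] [NormedSpace ℝ E] [TopologicalSpace H]
variable {I : ModelWithCorners ℝ E H}
variable {M : Type u} [TopologicalSpace M] [ChartedSpace H M]

section AuxLemmas

variable {E H : Type u} [NormedAddCommGroup E] [NormedSpace ℝ E] [TopologicalSpace H]
variable {I : ModelWithCorners ℝ E H}
variable {M : Type u} [TopologicalSpace M] [ChartedSpace H M]

theorem eq_of_covers_singletons (e : Envelopment I M) {p p' : e.carrier}
    (hp : p ∈ frontier (Set.range e.map)) (hp' : p' ∈ frontier (Set.range e.map))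
    (h : Covers (singletonBS e hp) (singletonBS e hp')) : p = p' := by
  by_contra hne
  obtain ⟨N, N₂, hN, hN₂, hpN, hp'N₂, hdisj⟩ := t2_separation hne
  obtain ⟨N', hN', hsub, himg⟩ := h N hN (Set.singleton_subset_iff.mpr hpN)
  have hp'cl : p' ∈ closure (Set.range e.map) := frontier_subset_closure hp'
  rw [mem_closure_iff] at hp'cl
  obtain ⟨x, ⟨hxN', hxN₂⟩, m, rfl⟩ :=
    hp'cl (N' ∩ N₂) (hN'.inter hN₂) ⟨hsub rfl, hp'N₂⟩
  have hxN : e.map m ∈ N := himg ⟨m, hxN', rfl⟩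
  exact Set.disjoint_left.mp hdisj hxN hxN₂

theorem StronglyAttached.of_covers {B B' : BoundarySet I M} {U : Set M}
    (h : Covers B' B) (hB' : StronglyAttached B' U) : StronglyAttached B U := by
  obtain ⟨N', hN', hsub', hcond⟩ := hB'
  obtain ⟨N, hN, hsub, himg⟩ := h N' hN' hsub'
  refine ⟨N, hN, hsub, ?_⟩
  rintro x ⟨hxN, m, rfl⟩
  have hm' : B'.env.map m ∈ N' := himg ⟨m, hxN, rfl⟩
  obtain ⟨u, hu, hum⟩ := hcond ⟨hm', ⟨m, rfl⟩⟩
  exact ⟨m, (B'.env.emb.injective hum) ▸ hu, rfl⟩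

theorem absStronglyAttached_iff (e : Envelopment I M) {p : e.carrier}
    (hp : p ∈ frontier (Set.range e.map)) (U : Set M) :
    AbsStronglyAttached (absOf e hp) U ↔ StronglyAttached (singletonBS e hp) U := by
  constructor
  · exact fun h => h _ rfl
  · intro h B hB
    exact StronglyAttached.of_covers (Quotient.exact hB).2 h

theorem mem_closure_of_stronglyAttached (e : Envelopment I M) {q : e.carrier}
    (hq : q ∈ frontier (Set.range e.map)) {U : Set M}
    (h : StronglyAttached (singletonBS e hq) U) : q ∈ closure (e.map '' U) := by
  obtain ⟨N, hN, hsub, hcond⟩ := h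
  rw [mem_closure_iff]
  intro O hO hqO
  have hqcl : q ∈ closure (Set.range e.map) := frontier_subset_closure hq
  rw [mem_closure_iff] at hqcl
  obtain ⟨x, ⟨hxO, hxN⟩, hxr⟩ := hqcl (O ∩ N) (hO.inter hN) ⟨hqO, hsub rfl⟩
  exact ⟨x, hxO, hcond ⟨hxN, hxr⟩⟩

theorem exists_attached_nbhd (e : Envelopment I M) {p : e.carrier}
    (hp : p ∈ frontier (Set.range e.map)) {W : Set e.carrier} (hW : IsOpen W) (hpW : p ∈ W) :
    ∃ U : Set M, IsOpen U ∧ StronglyAttached (singletonBS e hp) U ∧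
      closure (e.map '' U) ⊆ W := by
  obtain ⟨t, ht, htc, hts⟩ := exists_mem_nhds_isClosed_subset (hW.mem_nhds hpW)
  refine ⟨e.map ⁻¹' interior t, e.emb.continuous.isOpen_preimage _ isOpen_interior, ?_, ?_⟩
  · refine ⟨interior t, isOpen_interior,
      Set.singleton_subset_iff.mpr (mem_interior_iff_mem_nhds.mpr ht), ?_⟩
    rintro x ⟨hx, m, rfl⟩
    exact ⟨m, hx, rfl⟩
  · calc closure (e.map '' (e.map ⁻¹' interior t))
        ⊆ closure (interior t) := closure_mono (Set.image_preimage_subset _ _)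
      _ ⊆ closure t := closure_mono interior_subset
      _ = t := htc.closure_eq
      _ ⊆ W := hts

end AuxLemmas

/-- For an envelopment `φ : M → M̂`, the natural map `π : ∂φ(M) → σ_φ`, `p ↦ [p]`, is a
homeomorphism, where `∂φ(M)` carries the subspace topology from `M̂` and
`σ_φ = {[p] : p ∈ ∂φ(M)} ⊆ 𝓑(M)` carries the subspace topology induced by the strongly
attached point topology on `M̄`. -/
theorem boundary_quotient_homeomorph
    {E H : Type u} [NormedAddCommGroup E] [NormedSpace ℝ E] [TopologicalSpace H]
    {I : ModelWithCorners ℝ E H} {M : Type u} [TopologicalSpace M] [ChartedSpace H M]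
    [IsManifold I (⊤ : ℕ∞) M] [T2Space M] [ConnectedSpace M] [ParacompactSpace M]
    (e : Envelopment I M) :
    IsHomeomorph (fun p : {p : e.carrier // p ∈ frontier (Set.range e.map)} =>
      (⟨Mbar.ofB (absOf e p.2), p.1, p.2, rfl⟩ :
        {z : Mbar I M // ∃ (q : e.carrier) (hq : q ∈ frontier (Set.range e.map)),
          z = Mbar.ofB (absOf e hq)})) := by
  refine ⟨?_, ?_, ?_, ?_⟩
  · -- continuity
    apply Continuous.subtype_mk
    apply continuous_generateFrom_iff.mpr
    rintro s ⟨U, hU, rfl⟩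
    have hpre : (fun p : {p : e.carrier // p ∈ frontier (Set.range e.map)} =>
        Mbar.ofB (absOf e p.2)) ⁻¹' (Sum.inl '' U ∪ Sum.inr '' absAttachedSet I M U)
        = Subtype.val ⁻¹'
          (⋃₀ {N : Set e.carrier | IsOpen N ∧ N ∩ Set.range e.map ⊆ e.map '' U}) := by
      ext ⟨p, hp⟩
      simp only [Set.mem_preimage, Set.mem_union]
      constructor
      · rintro (⟨u, _, h⟩ | ⟨x, hx, h⟩)
        · exact absurd h (by simp [Mbar.ofB])
        · have hxe : x = absOf e hp := Sum.inr_injective h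
          rw [hxe] at hx
          obtain ⟨N, hN, hsub, hcond⟩ := (absStronglyAttached_iff e hp U).mp hx
          exact ⟨N, ⟨hN, hcond⟩, hsub rfl⟩
      · rintro ⟨N, ⟨hN, hcond⟩, hpN⟩
        right
        exact ⟨absOf e hp, (absStronglyAttached_iff e hp U).mpr
          ⟨N, hN, Set.singleton_subset_iff.mpr hpN, hcond⟩, rfl⟩
    refine (congrArg IsOpen hpre).mpr ?_
    exact (isOpen_sUnion (fun N hN => hN.1)).preimage continuous_subtype_val
  · -- open map
    intro s hs
    obtain ⟨W, hW, rfl⟩ := isOpen_induced_iff.mp hs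
    set f := (fun p : {p : e.carrier // p ∈ frontier (Set.range e.map)} =>
      (⟨Mbar.ofB (absOf e p.2), p.1, p.2, rfl⟩ :
        {z : Mbar I M // ∃ (q : e.carrier) (hq : q ∈ frontier (Set.range e.map)),
          z = Mbar.ofB (absOf e hq)})) with hf
    have himg : f '' (Subtype.val ⁻¹' W)
        = Subtype.val ⁻¹' (⋃₀ {t : Set (Mbar I M) | ∃ U : Set M, IsOpen U ∧
            closure (e.map '' U) ⊆ W ∧
            t = Sum.inl '' U ∪ Sum.inr '' absAttachedSet I M U}) := by
      ext z
      obtain ⟨zv, hzv⟩ := z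
      constructor
      · rintro ⟨⟨p, hp⟩, hpW, heq⟩
        have hzeq : zv = Mbar.ofB (absOf e hp) := (congrArg Subtype.val heq).symm
        obtain ⟨U, hUo, hatt, hcl⟩ := exists_attached_nbhd e hp hW hpW
        refine ⟨Sum.inl '' U ∪ Sum.inr '' absAttachedSet I M U, ⟨U, hUo, hcl, rfl⟩, ?_⟩
        show zv ∈ Sum.inl '' U ∪ Sum.inr '' absAttachedSet I M U
        rw [hzeq]
        exact Or.inr ⟨absOf e hp, (absStronglyAttached_iff e hp U).mpr hatt, rfl⟩
      · rintro ⟨t, ⟨U, hUo, hcl, rfl⟩, hzt⟩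
        obtain ⟨q, hq, hz⟩ := hzv
        have hq' : q ∈ W := by
          rcases hzt with ⟨u, _, hu⟩ | ⟨x, hx, hxe⟩
          · have hu' : (Sum.inl u : Mbar I M) = zv := hu
            rw [hz] at hu'
            exact absurd hu' (by simp [Mbar.ofB])
          · have : x = absOf e hq := Sum.inr_injective (hxe.trans hz)
            rw [this] at hx
            exact hcl (mem_closure_of_stronglyAttached e hq
              ((absStronglyAttached_iff e hq U).mp hx))
        exact ⟨⟨q, hq⟩, hq', Subtype.ext hz.symm⟩
    rw [himg]
    refine IsOpen.preimage continuous_subtype_val (isOpen_sUnion ?_)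
    rintro t ⟨U, hUo, -, rfl⟩
    exact TopologicalSpace.GenerateOpen.basic _ ⟨U, hUo, rfl⟩
  · -- injective
    rintro ⟨p, hp⟩ ⟨p', hp'⟩ h
    have h1 : Mbar.ofB (absOf e hp) = Mbar.ofB (absOf e hp') := congrArg Subtype.val h
    have h2 : absOf e hp = absOf e hp' := Sum.inr_injective h1
    have h3 : Quotient.mk (bsSetoid I M) (singletonBS e hp)
        = Quotient.mk (bsSetoid I M) (singletonBS e hp') := congrArg Subtype.val h2
    exact Subtype.ext (eq_of_covers_singletons e hp hp' (Quotient.exact h3).1)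
  · -- surjective
    rintro ⟨z, q, hq, hz⟩
    exact ⟨⟨q, hq⟩, Subtype.ext hz.symm⟩
end

section
/- Let φ : M → M̂ be an envelopment and define π̄ : cl_{M̂}(φ(M)) → M̄ by π̄(p) = φ⁻¹(p) for p ∈ φ(M) and π̄(p) = [p] for p ∈ ∂φ(M). When cl_{M̂}(φ(M)) carries the subspace topology from M̂ and M̄ carries the strongly attached point topology 𝒯_sap, the map π̄ is a topological embedding, i.e. a homeomorphism onto its image. -/
open scoped Manifold
open Set Filter Topology

universe u

variable {E H : Type u} [NormedAddCommGroup E] [NormedSpace ℝ E] [TopologicalSpace H]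
variable {I : ModelWithCorners ℝ E H}
variable {M : Type u} [TopologicalSpace M] [ChartedSpace H M]

open Classical

/-- The natural map `π̄ : cl_{M̂}(φ(M)) → M̄` of an envelopment `φ : M → M̂`, sending
`p ∈ φ(M)` to `φ⁻¹(p) ∈ M` and a boundary point `p ∈ ∂φ(M)` to `[p] ∈ 𝓑(M)`. -/
noncomputable def pibar {E H : Type u} [NormedAddCommGroup E] [NormedSpace ℝ E]
    [TopologicalSpace H] {I : ModelWithCorners ℝ E H}
    {M : Type u} [TopologicalSpace M] [ChartedSpace H M]
    (e : Envelopment I M)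
    (c : {z : e.carrier // z ∈ closure (Set.range e.map)}) : Mbar I M :=
  if h : c.1 ∈ Set.range e.map then Mbar.ofM h.choose
  else
    Mbar.ofB (absOf e (p := c.1) (by
      have hfr : frontier (Set.range e.map)
          = closure (Set.range e.map) \ Set.range e.map := by
        rw [frontier, e.emb.isOpen_range.interior_eq]
      rw [hfr]
      exact ⟨c.2, h⟩))


section Aux

variable (e : Envelopment I M)

/-- Points of `M̂` having an open neighbourhood `N` with `N ∩ φ(M) ⊆ φ(U)`. -/
def attachedAt (U : Set M) : Set e.carrier :=
  {z | ∃ N : Set e.carrier, IsOpen N ∧ z ∈ N ∧ N ∩ Set.range e.map ⊆ e.map '' U}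

lemma isOpen_attachedAt (U : Set M) : IsOpen (attachedAt e U) := by
  refine isOpen_iff_mem_nhds.mpr fun z hz => ?_
  obtain ⟨N, hN, hzN, hsub⟩ := hz
  exact Filter.mem_of_superset (hN.mem_nhds hzN) fun y hy => ⟨N, hN, hy, hsub⟩

lemma absSA_iff {p : e.carrier} (hp : p ∈ frontier (Set.range e.map)) (U : Set M) :
    AbsStronglyAttached (absOf e hp) U ↔ p ∈ attachedAt e U := by
  constructor
  · intro h
    obtain ⟨N, hN, hpN, hsub⟩ := h (singletonBS e hp) rfl
    exact ⟨N, hN, hpN rfl, hsub⟩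
  · rintro ⟨N, hN, hpN, hsub⟩ B hB
    have hrel := Quotient.exact hB
    obtain ⟨N', hN', hBN', hsub'⟩ := hrel.2 N hN (Set.singleton_subset_iff.mpr hpN)
    refine ⟨N', hN', hBN', ?_⟩
    rintro x ⟨hxN', m, rfl⟩
    have h1 : e.map m ∈ N := hsub' ⟨m, hxN', rfl⟩
    obtain ⟨u, hu, hum⟩ := hsub ⟨h1, Set.mem_range_self m⟩
    exact ⟨m, e.emb.injective hum ▸ hu, rfl⟩

lemma attached_closure {z : e.carrier} {U : Set M} (hz : z ∈ attachedAt e U)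
    (hcl : z ∈ closure (Set.range e.map)) : z ∈ closure (e.map '' U) := by
  obtain ⟨N, hN, hzN, hsub⟩ := hz
  rw [mem_closure_iff] at hcl ⊢
  intro O hO hzO
  obtain ⟨x, hx⟩ := hcl (O ∩ N) (hO.inter hN) ⟨hzO, hzN⟩
  exact ⟨x, hx.1.1, hsub ⟨hx.1.2, hx.2⟩⟩

lemma absOf_inj {p q : e.carrier} (hp : p ∈ frontier (Set.range e.map))
    (hq : q ∈ frontier (Set.range e.map))
    (h : Quotient.mk (bsSetoid I M) (singletonBS e hp)
        = Quotient.mk (bsSetoid I M) (singletonBS e hq)) : p = q := by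
  by_contra hne
  obtain ⟨N₁, N₂, hN₁, hN₂, hpN₁, hqN₂, hdisj⟩ := t2_separation hne
  obtain ⟨N', hN', hqN', hsub⟩ :=
    (Quotient.exact h).1 N₁ hN₁ (Set.singleton_subset_iff.mpr hpN₁)
  have hqcl : q ∈ closure (Set.range e.map) := hq.1
  obtain ⟨x, hx⟩ := mem_closure_iff.mp hqcl (N' ∩ N₂) (hN'.inter hN₂)
    ⟨hqN' rfl, hqN₂⟩
  obtain ⟨⟨hxN', hxN₂⟩, m, rfl⟩ := hx
  exact Set.disjoint_left.mp hdisj (hsub ⟨m, hxN', rfl⟩) hxN₂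

lemma pibar_preimage {U : Set M} (hU : IsOpen U) :
    pibar e ⁻¹' (Sum.inl '' U ∪ Sum.inr '' absAttachedSet I M U)
      = Subtype.val ⁻¹' attachedAt e U := by
  ext c
  simp only [Set.mem_preimage, pibar]
  split_ifs with h
  · simp only [Mbar.ofM, Set.mem_union, Set.mem_image]
    constructor
    · rintro (⟨m, hm, hEq⟩ | ⟨x, hx, hEq⟩)
      · obtain rfl : m = h.choose := Sum.inl.inj hEq
        exact ⟨e.map '' U, e.emb.isOpenMap _ hU,
          h.choose_spec ▸ Set.mem_image_of_mem _ hm, Set.inter_subset_left⟩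
      · exact absurd hEq (by simp)
    · rintro ⟨N, hN, hcN, hsub⟩
      obtain ⟨u, hu, hum⟩ := hsub ⟨hcN, h⟩
      left
      refine ⟨h.choose, ?_, rfl⟩
      have : u = h.choose := e.emb.injective (hum.trans h.choose_spec.symm)
      exact this ▸ hu
  · simp only [Mbar.ofB, Set.mem_union, Set.mem_image]
    constructor
    · rintro (⟨m, _, hEq⟩ | ⟨x, hx, hEq⟩)
      · exact absurd hEq (by simp)
      · obtain rfl : x = _ := Sum.inr.inj hEq
        exact (absSA_iff e _ U).mp hx
    · intro hc
      exact Or.inr ⟨_, (absSA_iff e _ U).mpr hc, rfl⟩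

lemma pibar_key (c : {z : e.carrier // z ∈ closure (Set.range e.map)})
    {V : Set e.carrier} (hV : IsOpen V) (hcV : c.1 ∈ V) :
    ∃ O : Set (Mbar I M), IsOpen O ∧ pibar e c ∈ O ∧
      pibar e ⁻¹' O ⊆ Subtype.val ⁻¹' V := by
  obtain ⟨s, hs, hsc, hsV⟩ := exists_mem_nhds_isClosed_subset (hV.mem_nhds hcV)
  have hW : IsOpen (interior s) := isOpen_interior
  have hcW : c.1 ∈ interior s := mem_interior_iff_mem_nhds.mpr hs
  have hclW : closure (interior s) ⊆ V :=
    (closure_minimal interior_subset hsc).trans hsV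
  set U : Set M := e.map ⁻¹' interior s with hUdef
  have hUopen : IsOpen U := hW.preimage e.emb.continuous
  have hatt : ∀ z : e.carrier, z ∈ attachedAt e U → z ∈ closure (Set.range e.map) → z ∈ V := by
    intro z hz hzc
    refine hclW (closure_mono ?_ (attached_closure e hz hzc))
    rintro x ⟨m, hm, rfl⟩
    exact hm
  refine ⟨Sum.inl '' U ∪ Sum.inr '' absAttachedSet I M U,
    TopologicalSpace.isOpen_generateFrom_of_mem ⟨U, hUopen, rfl⟩, ?_, ?_⟩
  · refine (Set.ext_iff.mp (pibar_preimage e hUopen) c).mpr ?_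
    exact ⟨interior s, hW, hcW, fun x hx => ⟨hx.2.choose,
      show e.map hx.2.choose ∈ interior s from hx.2.choose_spec.symm ▸ hx.1, hx.2.choose_spec⟩⟩
  · intro c' hc'
    exact hatt c'.1 ((Set.ext_iff.mp (pibar_preimage e hUopen) c').mp hc') c'.2

end Aux

/-- For an envelopment `φ : M → M̂`, the map `π̄ : cl_{M̂}(φ(M)) → M̄` is a topological
embedding (a homeomorphism onto its image), where `cl_{M̂}(φ(M))` carries the subspace topology
from `M̂` and `M̄` carries the strongly attached point topology. -/
theorem pibar_isEmbedding
    {E H : Type u} [NormedAddCommGroup E] [NormedSpace ℝ E] [TopologicalSpace H]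
    {I : ModelWithCorners ℝ E H} {M : Type u} [TopologicalSpace M] [ChartedSpace H M]
    [IsManifold I (⊤ : ℕ∞) M] [T2Space M] [ConnectedSpace M] [ParacompactSpace M]
    (e : Envelopment I M) :
    IsEmbedding (pibar e) := by
  have hcont : Continuous (pibar e) := by
    rw [show (instTopologicalSpaceMbar : TopologicalSpace (Mbar I M)) =
        TopologicalSpace.generateFrom _ from rfl] at *
    refine continuous_generateFrom_iff.mpr ?_
    rintro s ⟨U, hU, rfl⟩
    refine (congrArg IsOpen (pibar_preimage e hU)).mpr ?_
    exact (isOpen_attachedAt e U).preimage continuous_subtype_val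
  refine ⟨isInducing_iff_nhds.mpr fun c => le_antisymm hcont.continuousAt.le_comap ?_, ?_⟩
  · intro t ht
    rw [nhds_subtype, Filter.mem_comap] at ht
    obtain ⟨t', ht', hsub⟩ := ht
    obtain ⟨V, hVt', hV, hcV⟩ := mem_nhds_iff.mp ht'
    obtain ⟨O, hO, hmem, hOsub⟩ := pibar_key e c hV hcV
    exact Filter.mem_comap.mpr ⟨O, hO.mem_nhds hmem,
      hOsub.trans ((Set.preimage_mono hVt').trans hsub)⟩
  · intro c c' h
    apply Subtype.ext
    by_cases h1 : c.1 ∈ Set.range e.map <;> by_cases h2 : c'.1 ∈ Set.range e.map <;>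
      simp only [pibar, dif_pos, dif_neg, h1, h2, Mbar.ofM, Mbar.ofB, dite_true,
        dite_false] at h
    · have h' := (dif_pos h1).symm.trans (h.trans (dif_pos h2))
      rw [← h1.choose_spec, ← h2.choose_spec, Sum.inl.inj h']
    · have h' := (dif_pos h1).symm.trans (h.trans (dif_neg h2))
      exact absurd h' Sum.inl_ne_inr
    · have h' := (dif_neg h1).symm.trans (h.trans (dif_pos h2))
      exact absurd h' Sum.inr_ne_inl
    · have h' := (dif_neg h1).symm.trans (h.trans (dif_neg h2))
      exact absOf_inj e _ _ (congrArg Subtype.val (Sum.inr.inj h'))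
end

section
/- Let 𝒮 ⊆ 𝓑(M) be a distinguished set of abstract boundary points. If U ⊆ M is a singular neighborhood (with respect to 𝒮) and φ : M → M̂ is any envelopment, then there exists an open set Û ⊆ M̂ containing every boundary point p ∈ ∂φ(M) with [p] ∈ 𝒮, such that Û ∩ φ(M) = φ(U). -/
open scoped Manifold
open Set Filter Topology

universe u

variable {E H : Type u} [NormedAddCommGroup E] [NormedSpace ℝ E] [TopologicalSpace H]
variable {I : ModelWithCorners ℝ E H}
variable {M : Type u} [TopologicalSpace M] [ChartedSpace H M]

/-- If `U ⊆ M` is a singular neighbourhood with respect to a distinguished set `𝒮` of abstract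
boundary points and `φ : M → M̂` is any envelopment, then there is an open `Û ⊆ M̂` containing
every boundary point `p ∈ ∂φ(M)` with `[p] ∈ 𝒮` such that `Û ∩ φ(M) = φ(U)`. -/
theorem singularNbhd_envelopment
    {E H : Type u} [NormedAddCommGroup E] [NormedSpace ℝ E] [TopologicalSpace H]
    {I : ModelWithCorners ℝ E H} {M : Type u} [TopologicalSpace M] [ChartedSpace H M]
    [IsManifold I (⊤ : ℕ∞) M] [T2Space M] [ConnectedSpace M] [ParacompactSpace M]
    (𝒮 : Set (AbstractBoundary I M)) (U : Set M) (hU : SingularNbhd 𝒮 U)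
    (e : Envelopment I M) :
    ∃ Uhat : Set e.carrier, IsOpen Uhat ∧
      (∀ (p : e.carrier) (hp : p ∈ frontier (Set.range e.map)),
        absOf e hp ∈ 𝒮 → p ∈ Uhat) ∧
      Uhat ∩ Set.range e.map = e.map '' U := by
  classical
  have key : ∀ p : e.carrier, (∃ hp : p ∈ frontier (Set.range e.map), absOf e hp ∈ 𝒮) →
      ∃ N : Set e.carrier, IsOpen N ∧ p ∈ N ∧ N ∩ Set.range e.map ⊆ e.map '' U := by
    rintro p ⟨hp, hpS⟩
    obtain ⟨N, hNo, hpN, hsub⟩ := hU.2 _ hpS (singletonBS e hp) rfl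
    exact ⟨N, hNo, hpN rfl, hsub⟩
  choose! N hNo hpN hNsub using key
  refine ⟨e.map '' U ∪ ⋃ p ∈ {p : e.carrier |
      ∃ hp : p ∈ frontier (Set.range e.map), absOf e hp ∈ 𝒮}, N p, ?_, ?_, ?_⟩
  · exact (e.emb.isOpenMap U hU.1).union (isOpen_biUnion fun p hp => hNo p hp)
  · intro p hp hpS
    exact Or.inr (Set.mem_biUnion ⟨hp, hpS⟩ (hpN p ⟨hp, hpS⟩))
  · apply Set.Subset.antisymm
    · rintro x ⟨hx1 | hx2, hxr⟩
      · exact hx1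
      · obtain ⟨p, hpS, hxN⟩ := Set.mem_iUnion₂.mp hx2
        exact hNsub p hpS ⟨hxN, hxr⟩
    · intro x hx
      exact ⟨Or.inl hx, Set.image_subset_range _ _ hx⟩
end

section
/- Let 𝒮 ⊆ 𝓑(M) be a distinguished set of abstract boundary points. If a subset S ⊆ M meets every singular neighborhood (with respect to 𝒮), then S has an accumulation point in M̄, endowed with the strongly attached point topology 𝒯_sap, belonging to 𝒮. -/
open scoped Manifold
open Set Filter Topology

universe u

variable {E H : Type u} [NormedAddCommGroup E] [NormedSpace ℝ E] [TopologicalSpace H]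
variable {I : ModelWithCorners ℝ E H}
variable {M : Type u} [TopologicalSpace M] [ChartedSpace H M]

theorem stronglyAttached_mono {B : BoundarySet I M} {U V : Set M}
    (h : StronglyAttached B U) (hUV : U ⊆ V) : StronglyAttached B V := by
  obtain ⟨N, hN, hBN, hsub⟩ := h
  exact ⟨N, hN, hBN, hsub.trans (Set.image_mono hUV)⟩

theorem stronglyAttached_inter {B : BoundarySet I M} {U V : Set M}
    (hU : StronglyAttached B U) (hV : StronglyAttached B V) :
    StronglyAttached B (U ∩ V) := by
  obtain ⟨N₁, hN₁, hBN₁, hsub₁⟩ := hU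
  obtain ⟨N₂, hN₂, hBN₂, hsub₂⟩ := hV
  refine ⟨N₁ ∩ N₂, hN₁.inter hN₂, Set.subset_inter hBN₁ hBN₂, ?_⟩
  rw [Set.image_inter B.env.emb.injective]
  intro x hx
  exact ⟨hsub₁ ⟨hx.1.1, hx.2⟩, hsub₂ ⟨hx.1.2, hx.2⟩⟩

theorem absStronglyAttached_mono {x : AbstractBoundary I M} {U V : Set M}
    (h : AbsStronglyAttached x U) (hUV : U ⊆ V) : AbsStronglyAttached x V :=
  fun B hB => stronglyAttached_mono (h B hB) hUV

theorem absStronglyAttached_inter {x : AbstractBoundary I M} {U V : Set M}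
    (hU : AbsStronglyAttached x U) (hV : AbsStronglyAttached x V) :
    AbsStronglyAttached x (U ∩ V) :=
  fun B hB => stronglyAttached_inter (hU B hB) (hV B hB)

theorem sap_basis : TopologicalSpace.IsTopologicalBasis
    {s : Set (Mbar I M) | ∃ U : Set M, IsOpen U ∧
      s = Sum.inl '' U ∪ Sum.inr '' absAttachedSet I M U} where
  exists_subset_inter := by
    rintro s ⟨U, hU, rfl⟩ t ⟨V, hV, rfl⟩ a ⟨haU, haV⟩
    refine ⟨Sum.inl '' (U ∩ V) ∪ Sum.inr '' absAttachedSet I M (U ∩ V),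
      ⟨U ∩ V, hU.inter hV, rfl⟩, ?_, ?_⟩
    · cases a with
      | inl m =>
        refine Or.inl ⟨m, ⟨?_, ?_⟩, rfl⟩
        · rcases haU with ⟨m', hm', hmm⟩ | ⟨b, _, hb⟩
          · obtain rfl : m' = m := Sum.inl.inj hmm
            exact hm'
          · exact absurd hb (by simp)
        · rcases haV with ⟨m', hm', hmm⟩ | ⟨b, _, hb⟩
          · obtain rfl : m' = m := Sum.inl.inj hmm
            exact hm'
          · exact absurd hb (by simp)
      | inr b =>
        refine Or.inr ⟨b, absStronglyAttached_inter ?_ ?_, rfl⟩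
        · rcases haU with ⟨m', _, hmm⟩ | ⟨b', hb', hbb⟩
          · exact absurd hmm (by simp)
          · obtain rfl : b' = b := Sum.inr.inj hbb
            exact hb'
        · rcases haV with ⟨m', _, hmm⟩ | ⟨b', hb', hbb⟩
          · exact absurd hmm (by simp)
          · obtain rfl : b' = b := Sum.inr.inj hbb
            exact hb'
    · rintro y (⟨m, hm, rfl⟩ | ⟨b, hb, rfl⟩)
      · exact ⟨Or.inl ⟨m, hm.1, rfl⟩, Or.inl ⟨m, hm.2, rfl⟩⟩
      · exact ⟨Or.inr ⟨b, absStronglyAttached_mono hb Set.inter_subset_left, rfl⟩,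
          Or.inr ⟨b, absStronglyAttached_mono hb Set.inter_subset_right, rfl⟩⟩
  sUnion_eq := by
    refine Set.eq_univ_of_forall fun a => ?_
    refine ⟨Sum.inl '' Set.univ ∪ Sum.inr '' absAttachedSet I M Set.univ,
      ⟨Set.univ, isOpen_univ, rfl⟩, ?_⟩
    cases a with
    | inl m => exact Or.inl ⟨m, trivial, rfl⟩
    | inr b =>
      refine Or.inr ⟨b, fun B _ => ⟨Set.univ, isOpen_univ, Set.subset_univ _, ?_⟩, rfl⟩
      rw [Set.image_univ]
      exact Set.inter_subset_right
  eq_generateFrom := rfl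

/-- If a subset `S ⊆ M` meets every singular neighbourhood (with respect to a distinguished set
`𝒮` of abstract boundary points), then `S` has an accumulation point in `M̄` (with the strongly
attached point topology) belonging to `𝒮`. -/
theorem acc_pt_of_meets_every_singularNbhd
    {E H : Type u} [NormedAddCommGroup E] [NormedSpace ℝ E] [TopologicalSpace H]
    {I : ModelWithCorners ℝ E H} {M : Type u} [TopologicalSpace M] [ChartedSpace H M]
    [IsManifold I (⊤ : ℕ∞) M] [T2Space M] [ConnectedSpace M] [ParacompactSpace M]
    (𝒮 : Set (AbstractBoundary I M)) (S : Set M)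
    (hS : ∀ U : Set M, SingularNbhd 𝒮 U → (S ∩ U).Nonempty) :
    ∃ x ∈ 𝒮, AccPt (Mbar.ofB x) (Filter.principal (Mbar.ofM '' S)) := by
  by_contra hcon
  push_neg at hcon
  -- For each x ∈ 𝒮, extract an open U_x with x strongly attached to U_x and U_x ∩ S = ∅.
  have key : ∀ x ∈ 𝒮, ∃ U : Set M, IsOpen U ∧ AbsStronglyAttached x U ∧ U ∩ S = ∅ := by
    intro x hx
    have hacc := hcon x hx
    rw [accPt_iff_nhds] at hacc
    push_neg at hacc
    obtain ⟨W, hW, hWS⟩ := hacc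
    obtain ⟨t, ⟨U, hU, rfl⟩, hat, htW⟩ :=
      (sap_basis (I := I) (M := M)).mem_nhds_iff.mp hW
    refine ⟨U, hU, ?_, ?_⟩
    · rcases hat with ⟨m, _, hm⟩ | ⟨b, hb, hbb⟩
      · exact absurd hm (by simp [Mbar.ofB])
      · obtain rfl : b = x := Sum.inr.inj hbb
        exact hb
    · ext m
      simp only [Set.mem_inter_iff, Set.mem_empty_iff_false, iff_false, not_and]
      intro hmU hmS
      have : (Sum.inl m : Mbar I M) ∈ W ∩ Mbar.ofM '' S :=
        ⟨htW (Or.inl ⟨m, hmU, rfl⟩), ⟨m, hmS, rfl⟩⟩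
      have := hWS _ this
      simp [Mbar.ofB, Mbar.ofM] at this
  choose! U hUopen hUatt hUS using key
  -- The union of the U_x is a singular neighbourhood disjoint from S.
  set V : Set M := ⋃ x ∈ 𝒮, U x with hV
  have hVsing : SingularNbhd 𝒮 V := by
    refine ⟨isOpen_biUnion fun x hx => hUopen x hx, fun x hx => ?_⟩
    exact absStronglyAttached_mono (hUatt x hx) (Set.subset_biUnion_of_mem hx)
  obtain ⟨m, hmS, hmV⟩ := hS V hVsing
  obtain ⟨x, hx, hmU⟩ := Set.mem_iUnion₂.mp hmV
  exact absurd (Set.mem_inter hmU hmS) (by rw [hUS x hx]; exact Set.notMem_empty m)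
end

section
/- Let 𝒮 ⊆ 𝓑(M) be a distinguished set of abstract boundary points, let V ⊆ M be open, and let C denote the closure of V in M. Suppose there exists an envelopment φ : M → M̂ such that the closure of φ(V) in M̂ is compact and every boundary point p ∈ ∂φ(M) attached to V (i.e., lying in the closure of φ(V) in M̂) satisfies [p] ∈ 𝒮. Then C is singularly compact with respect to the singular neighborhoods determined by 𝒮. -/
open scoped Manifold
open Set Filter Topology

universe u

variable {E H : Type u} [NormedAddCommGroup E] [NormedSpace ℝ E] [TopologicalSpace H]
variable {I : ModelWithCorners ℝ E H}
variable {M : Type u} [TopologicalSpace M] [ChartedSpace H M]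

/-- If `V ⊆ M` is open and there is an envelopment `φ : M → M̂` under which the closure of
`φ(V)` is compact and every boundary point `p ∈ ∂φ(M)` attached to `V` (i.e. lying in the
closure of `φ(V)`) satisfies `[p] ∈ 𝒮`, then the closure of `V` in `M` is singularly compact
with respect to the singular neighbourhoods determined by `𝒮`. -/
theorem singularlyCompact_of_envelopment_compact
    {E H : Type u} [NormedAddCommGroup E] [NormedSpace ℝ E] [TopologicalSpace H]
    {I : ModelWithCorners ℝ E H} {M : Type u} [TopologicalSpace M] [ChartedSpace H M]
    [IsManifold I (⊤ : ℕ∞) M] [T2Space M] [ConnectedSpace M] [ParacompactSpace M]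
    (𝒮 : Set (AbstractBoundary I M)) (V : Set M) (hV : IsOpen V)
    (e : Envelopment I M)
    (hcomp : IsCompact (closure (e.map '' V)))
    (hbd : ∀ (p : e.carrier) (hp : p ∈ frontier (Set.range e.map)),
      p ∈ closure (e.map '' V) → absOf e hp ∈ 𝒮) :
    SingularlyCompact 𝒮 (closure V) := by
  classical
  refine ⟨isClosed_closure, ?_⟩
  intro U hU
  set f := e.map with hf
  have hemb := e.emb
  set S : Set M := closure V \ U with hS
  have hSclosed : IsClosed S := isClosed_closure.sdiff hU.1
  have himg : f '' S ⊆ closure (f '' V) := by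
    rintro x ⟨m, hm, rfl⟩
    exact map_mem_closure hemb.continuous hm.1 (Set.mapsTo_image f V)
  have hclsub : closure (f '' S) ⊆ closure (f '' V) :=
    closure_minimal himg isClosed_closure
  -- no frontier point lies in closure (f '' S)
  have hfr : ∀ p ∈ frontier (Set.range f), p ∉ closure (f '' S) := by
    intro p hp hpc
    have hpS : absOf e hp ∈ 𝒮 := hbd p hp (hclsub hpc)
    have hatt : StronglyAttached (singletonBS e hp) U :=
      hU.2 _ hpS (singletonBS e hp) rfl
    obtain ⟨N, hNopen, hpN, hNU⟩ := hatt
    obtain ⟨y, hyN, m, hmS, rfl⟩ :=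
      (mem_closure_iff.mp hpc) N hNopen (hpN rfl)
    have : f m ∈ f '' U := hNU ⟨hyN, ⟨m, rfl⟩⟩
    obtain ⟨u, huU, hu⟩ := this
    exact hmS.2 (hemb.injective hu ▸ huU)
  -- closure (f '' S) ⊆ range f
  have hclrange : closure (f '' S) ⊆ Set.range f := by
    intro q hq
    by_contra hqr
    have hqc : q ∈ closure (Set.range f) :=
      closure_mono (Set.image_subset_range f S) hq
    have : q ∈ frontier (Set.range f) := by
      rw [frontier, hemb.isOpen_range.interior_eq]
      exact ⟨hqc, hqr⟩
    exact hfr q this hq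
  -- f '' S is closed
  have hclosedimg : IsClosed (f '' S) := by
    rw [← closure_subset_iff_isClosed]
    intro q hq
    obtain ⟨m, rfl⟩ := hclrange hq
    have : m ∈ closure S := by
      rw [hemb.toIsEmbedding.closure_eq_preimage_closure_image S]
      exact hq
    exact ⟨m, hSclosed.closure_subset this, rfl⟩
  have hcompimg : IsCompact (f '' S) :=
    hcomp.of_isClosed_subset hclosedimg (Set.Subset.trans (subset_closure) hclsub)
  exact hemb.toIsEmbedding.isCompact_iff.mpr hcompimg
end
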